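/- Let T be a weak mixing measure-preserving G-action and H ⊆ G a closed subgroup. Then the restriction T|_H is weak mixing if and only if T|_H is ergodic. -/

import Mathlib

open MeasureTheory

open Filter Metric
open scoped Pointwise ComplexConjugate Topology

/-- A measurable unimodular character on a locally compact second-countable group
is automatically continuous (via the Steinhaus theorem). -/
lemma measurable_char_continuous
    {G : Type*} [TopologicalSpace G] [AddCommGroup G] [IsTopologicalAddGroup G]
    [LocallyCompactSpace G] [SecondCountableTopology G]
    [MeasurableSpace G] [BorelSpace G]
    (α : G → ℂ) (hmeas : Measurable α) (hnorm : ∀ g, ‖α g‖ = 1)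
    (hhom : ∀ g h, α (g + h) = α g * α h) : Continuous α := by
  have hne : ∀ g, α g ≠ 0 := fun g hg => by
    have := hnorm g; rw [hg] at this; simp at this
  have h0 : α 0 = 1 := by
    have h := hhom 0 0
    rw [add_zero] at h
    exact (mul_left_cancel₀ (hne 0) (by rw [mul_one]; exact h)).symm
  haveI : Nonempty G := ⟨0⟩
  set ν : Measure G := MeasureTheory.Measure.addHaar with hν
  have hcont0 : Tendsto α (𝓝 0) (𝓝 1) := by
    rw [Metric.tendsto_nhds]
    intro ε hε
    obtain ⟨D, hDc, hDd⟩ := TopologicalSpace.exists_countable_dense ℂ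
    have hcov : (Set.univ : Set G) ⊆ ⋃ q ∈ D, α ⁻¹' Metric.ball q (ε / 2) := by
      intro g _
      obtain ⟨q, hqD, hq⟩ := hDd.exists_dist_lt (α g) (by positivity : (0:ℝ) < ε / 2)
      exact Set.mem_biUnion hqD (by simpa [Metric.mem_ball, dist_comm] using hq)
    have hpos : ∃ q ∈ D, 0 < ν (α ⁻¹' Metric.ball q (ε / 2)) := by
      by_contra hcon
      push_neg at hcon
      have hz : ν (⋃ q ∈ D, α ⁻¹' Metric.ball q (ε / 2)) = 0 := by
        refine (measure_biUnion_null_iff hDc).2 fun q hq => ?_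
        exact le_antisymm (hcon q hq) zero_le
      have : ν (Set.univ : Set G) = 0 :=
        le_antisymm (hz ▸ measure_mono hcov) zero_le
      exact absurd this (isOpen_univ.measure_ne_zero ν ⟨0, trivial⟩)
    obtain ⟨q, hqD, hq⟩ := hpos
    have hEm : MeasurableSet (α ⁻¹' Metric.ball q (ε / 2)) :=
      hmeas measurableSet_ball
    have hsub : α ⁻¹' Metric.ball q (ε / 2) - α ⁻¹' Metric.ball q (ε / 2) ∈ 𝓝 (0 : G) :=
      MeasureTheory.Measure.sub_mem_nhds_zero_of_addHaar_pos ν _ hEm hq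
    filter_upwards [hsub] with g hg
    obtain ⟨a, ha, b, hb, hab⟩ := Set.mem_sub.1 hg
    have hab' : a = g + b := by rw [← hab]; abel
    have ha' : dist (α a) q < ε / 2 := Metric.mem_ball.1 ha
    have hb' : dist (α b) q < ε / 2 := Metric.mem_ball.1 hb
    have hαa : α a = α g * α b := by rw [hab', hhom]
    have : α g - 1 = (α a - α b) * (α b)⁻¹ := by
      field_simp [hne b, hαa]; rw [hαa]; ring
    rw [dist_eq_norm, this, norm_mul, norm_inv, hnorm b, inv_one, mul_one]
    calc ‖α a - α b‖ ≤ dist (α a) q + dist q (α b) := by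
          rw [← dist_eq_norm]; exact dist_triangle _ _ _
      _ < ε / 2 + ε / 2 := by rw [dist_comm q (α b)]; exact add_lt_add ha' hb'
      _ = ε := by ring
  rw [continuous_iff_continuousAt]
  intro g₀
  have key : ∀ g, α g = α g₀ * α (g - g₀) := fun g => by
    rw [← hhom, add_sub_cancel]
  have ht : Tendsto (fun g => α g₀ * α (g - g₀)) (𝓝 g₀) (𝓝 (α g₀ * 1)) := by
    exact tendsto_const_nhds.mul (hcont0.comp (by
      exact (continuous_id.sub continuous_const).tendsto' g₀ 0 (by simp)))
  have := ht.congr (fun g => (key g).symm)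
  exact (by simpa [mul_one] using this : Tendsto α (𝓝 g₀) (𝓝 (α g₀)))
open MeasureTheory Filter Metric
open scoped Pointwise ComplexConjugate Topology


/-- Let `T` be a weak mixing measure-preserving `G`-action (every
eigenfunction for a continuous unimodular character of `G` is a.e. constant) and `H ⊆ G` a
closed subgroup.  Then the restriction `T|_H` is weak mixing if and only if it is
ergodic. -/
theorem stmt_13
    (G : Type*) [TopologicalSpace G] [AddCommGroup G] [IsTopologicalAddGroup G]
    [LocallyCompactSpace G] [SecondCountableTopology G]
    [MeasurableSpace G] [BorelSpace G]
    (X : Type*) [MeasurableSpace X] (μ : Measure X) [IsProbabilityMeasure μ]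
    (T : G → X → X)
    (hmp : ∀ g, MeasurePreserving (T g) μ μ)
    (hhom : ∀ g h x, T (g + h) x = T g (T h x))
    (hid : ∀ x, T 0 x = x)
    (hTmeas : Measurable fun p : G × X => T p.1 p.2)
    (hwm : ∀ γ : G → ℂ, Continuous γ → (∀ g, ‖γ g‖ = 1) →
      (∀ g h, γ (g + h) = γ g * γ h) →
      ∀ f : X → ℂ, MemLp f 2 μ →
        (∀ g, (fun x => f (T g x)) =ᵐ[μ] fun x => γ g * f x) →
        ∃ c : ℂ, f =ᵐ[μ] fun _ => c)
    (H : AddSubgroup G) (hH : IsClosed (H : Set G)) :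
    (∀ χ : ↥H → ℂ, Continuous χ → (∀ h, ‖χ h‖ = 1) →
      (∀ h h', χ (h + h') = χ h * χ h') →
      ∀ f : X → ℂ, MemLp f 2 μ →
        (∀ h : ↥H, (fun x => f (T (h : G) x)) =ᵐ[μ] fun x => χ h * f x) →
        ∃ c : ℂ, f =ᵐ[μ] fun _ => c) ↔
    (∀ f : X → ℂ, MemLp f 2 μ →
      (∀ h : ↥H, (fun x => f (T (h : G) x)) =ᵐ[μ] f) →
      ∃ c : ℂ, f =ᵐ[μ] fun _ => c) := by
  constructor
  · -- weak mixing → ergodic : apply with the trivial character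
    intro hwmH f hf hinv
    refine hwmH (fun _ => 1) continuous_const (by simp) (by simp) f hf fun h => ?_
    simpa using hinv h
  · -- ergodic → weak mixing
    intro herg χ hχc hχn hχh f hf heig
    haveI : (ae μ).NeBot := ae_neBot.2 (IsProbabilityMeasure.ne_zero μ)
    -- a strongly measurable representative of f
    obtain ⟨f', hf'sm, hff'⟩ : ∃ f', StronglyMeasurable f' ∧ f =ᵐ[μ] f' :=
      ⟨hf.aestronglyMeasurable.mk f, hf.aestronglyMeasurable.stronglyMeasurable_mk,
        hf.aestronglyMeasurable.ae_eq_mk⟩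
    have hf' : MemLp f' 2 μ := hf.ae_eq hff'
    have hTg : ∀ g : G, Measurable (T g) := fun g =>
      hTmeas.comp (measurable_prodMk_left : Measurable fun x : X => (g, x))
    have hcomp : ∀ (g : G) {u v : X → ℂ}, u =ᵐ[μ] v →
        (fun x => u (T g x)) =ᵐ[μ] fun x => v (T g x) := fun g u v h =>
      (hmp g).quasiMeasurePreserving.ae_eq_comp h
    have heig' : ∀ h : ↥H, (fun x => f' (T (h : G) x)) =ᵐ[μ] fun x => χ h * f' x := by
      intro h
      refine ((hcomp (h : G) hff'.symm).trans ((heig h).trans ?_))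
      exact hff'.mono fun x hx => by dsimp only; rw [hx]
    -- Step 1: the modulus of f' is a.e. constant, by ergodicity
    have hmabs : MemLp (fun x => (‖f' x‖ : ℂ)) 2 μ := by
      refine MemLp.of_le hf'
        (Complex.continuous_ofReal.comp_stronglyMeasurable hf'sm.norm).aestronglyMeasurable
        (Eventually.of_forall fun x => ?_)
      simp [Complex.norm_real]
    have hminv : ∀ h : ↥H,
        (fun x => ((‖f' (T (h : G) x)‖ : ℝ) : ℂ)) =ᵐ[μ] fun x => ((‖f' x‖ : ℝ) : ℂ) := by
      intro h
      filter_upwards [heig' h] with x hx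
      rw [hx, norm_mul, hχn, one_mul]
    obtain ⟨c₀, hc₀⟩ := herg _ hmabs hminv
    set r : ℝ := c₀.re with hrdef
    have hr : (fun x => ‖f' x‖) =ᵐ[μ] fun _ => r := by
      filter_upwards [hc₀] with x hx
      have := congrArg Complex.re hx
      simpa using this
    by_cases hr0 : r = 0
    · refine ⟨0, hff'.trans ?_⟩
      filter_upwards [hr] with x hx
      rw [hr0] at hx
      exact norm_eq_zero.1 hx
    have hrpos : 0 < r := by
      obtain ⟨x, hx⟩ := hr.exists
      dsimp only at hx
      exact lt_of_le_of_ne (hx ▸ norm_nonneg _) (Ne.symm hr0)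
    have hrg : ∀ g : G, (fun x => ‖f' (T g x)‖) =ᵐ[μ] fun _ => r := fun g => by
      simpa [Function.comp_def] using (hmp g).quasiMeasurePreserving.ae_eq_comp hr
    -- Step 2: for each g, f' · conj (f' ∘ T g) is H-invariant, hence a.e. constant
    have hχc1 : ∀ h : ↥H, χ h * conj (χ h) = 1 := by
      intro h
      rw [Complex.mul_conj, Complex.normSq_eq_norm_sq, hχn, one_pow,
        Complex.ofReal_one]
    have hFm : StronglyMeasurable fun p : G × X => f' p.2 * conj (f' (T p.1 p.2)) := by
      have h1 : Measurable fun p : G × X => f' p.2 := hf'sm.measurable.comp measurable_snd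
      have h2 : Measurable fun p : G × X => f' (T p.1 p.2) := hf'sm.measurable.comp hTmeas
      have h3 : Measurable fun p : G × X => conj (f' (T p.1 p.2)) :=
        Complex.continuous_conj.measurable.comp h2
      exact (h1.mul h3).stronglyMeasurable
    have hcommute : ∀ (g : G) (h : ↥H) (x : X), T g (T (h : G) x) = T (h : G) (T g x) := by
      intro g h x
      rw [← hhom, add_comm, hhom]
    have hFℒp : ∀ g : G, MemLp (fun x => f' x * conj (f' (T g x))) 2 μ := by
      intro g
      have haesm : AEStronglyMeasurable (fun x => f' x * conj (f' (T g x))) μ :=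
        ((hf'sm.measurable.mul
          (Complex.continuous_conj.measurable.comp
            (hf'sm.measurable.comp (hTg g)))).stronglyMeasurable).aestronglyMeasurable
      refine MemLp.of_bound haesm (r * r) ?_
      filter_upwards [hr, hrg g] with x h1 h2
      simp only [norm_mul, RCLike.norm_conj]
      rw [h1, h2]
    set cfun : G → ℂ := fun g => ∫ x, f' x * conj (f' (T g x)) ∂μ with hcfdef
    have hkey : ∀ g : G, (fun x => f' x * conj (f' (T g x))) =ᵐ[μ] fun _ => cfun g := by
      intro g
      have hHinv : ∀ h : ↥H,
          (fun x => f' (T (h : G) x) * conj (f' (T g (T (h : G) x)))) =ᵐ[μ]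
            fun x => f' x * conj (f' (T g x)) := by
        intro h
        have e2 : (fun x => f' (T (h : G) (T g x))) =ᵐ[μ] fun x => χ h * f' (T g x) := by
          simpa [Function.comp_def] using (hmp g).quasiMeasurePreserving.ae_eq_comp (heig' h)
        filter_upwards [heig' h, e2] with x h1 h2
        rw [hcommute g h x, h1, h2, map_mul]
        linear_combination f' x * conj (f' (T g x)) * hχc1 h
      obtain ⟨c, hc⟩ := herg _ (hFℒp g) hHinv
      have hceq : cfun g = c := by
        show (∫ x, f' x * conj (f' (T g x)) ∂μ) = c
        rw [integral_congr_ae hc]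
        simp
      rw [hceq]
      exact hc
    -- Step 3: f' is an eigenfunction for the whole group G
    set α : G → ℂ := fun g => conj (cfun g) / ((r : ℂ) ^ 2) with hαdef
    have hr2 : ((r : ℂ) ^ 2) ≠ 0 := pow_ne_zero _ (Complex.ofReal_ne_zero.2 hr0)
    have heigG : ∀ g : G, (fun x => f' (T g x)) =ᵐ[μ] fun x => α g * f' x := by
      intro g
      filter_upwards [hkey g, hr] with x h1 h2
      -- h1 : f' x * conj (f' (T g x)) = cfun g,  h2 : ‖f' x‖ = r
      have hfx : f' x * conj (f' x) = (r : ℂ) ^ 2 := by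
        rw [Complex.mul_conj, Complex.normSq_eq_norm_sq, h2]
        push_cast
        ring
      have h1' : conj (f' x) * f' (T g x) = conj (cfun g) := by
        have := congrArg conj h1
        simpa [map_mul, mul_comm] using this
      have hmain : ((r : ℂ) ^ 2) * f' (T g x) = conj (cfun g) * f' x := by
        calc ((r : ℂ) ^ 2) * f' (T g x) = (f' x * conj (f' x)) * f' (T g x) := by rw [hfx]
          _ = (conj (f' x) * f' (T g x)) * f' x := by ring
          _ = conj (cfun g) * f' x := by rw [h1']
      have hα : α g = conj (cfun g) / ((r : ℂ) ^ 2) := rfl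
      rw [hα, div_mul_eq_mul_div, ← hmain, mul_comm ((r : ℂ) ^ 2) (f' (T g x)),
        mul_div_assoc, div_self hr2, mul_one]
    have hnormα : ∀ g : G, ‖α g‖ = 1 := by
      intro g
      obtain ⟨x, hx1, hx2, hx3⟩ := ((heigG g).and ((hrg g).and hr)).exists
      have hx1' : f' (T g x) = α g * f' x := hx1
      have hx2' : ‖f' (T g x)‖ = r := hx2
      have hx3' : ‖f' x‖ = r := hx3
      have h4 : ‖α g‖ * r = r := by
        calc ‖α g‖ * r = ‖α g‖ * ‖f' x‖ := by rw [hx3']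
          _ = ‖α g * f' x‖ := (norm_mul _ _).symm
          _ = ‖f' (T g x)‖ := by rw [hx1']
          _ = r := hx2'
      exact mul_right_cancel₀ hr0 (h4.trans (one_mul r).symm)
    have hhomα : ∀ g h : G, α (g + h) = α g * α h := by
      intro g h
      have e2 : (fun x => f' (T (g + h) x)) =ᵐ[μ] fun x => α g * α h * f' x := by
        have e3 : (fun x => f' (T g (T h x))) =ᵐ[μ] fun x => α g * f' (T h x) := by
          simpa [Function.comp_def] using (hmp h).quasiMeasurePreserving.ae_eq_comp (heigG g)
        filter_upwards [e3, heigG h] with x h1 h2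
        rw [hhom, h1, h2]
        ring
      obtain ⟨x, hx1, hx2, hx3⟩ := ((heigG (g + h)).and (e2.and hr)).exists
      have hx1' : f' (T (g + h) x) = α (g + h) * f' x := hx1
      have hx2' : f' (T (g + h) x) = α g * α h * f' x := hx2
      have hx3' : ‖f' x‖ = r := hx3
      have hfx0 : f' x ≠ 0 := by
        rw [← norm_ne_zero_iff, hx3']; exact hr0
      exact mul_right_cancel₀ hfx0 (hx1'.symm.trans hx2')
    -- Step 4: α is measurable, hence continuous
    have hcm : Measurable cfun := hFm.integral_prod_right'.measurable
    have hmα : Measurable α := by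
      exact (Complex.continuous_conj.measurable.comp hcm).div_const _
    have hcα : Continuous α := measurable_char_continuous α hmα hnormα hhomα
    -- Step 5: conclude by weak mixing of the G-action
    refine hwm α hcα hnormα hhomα f hf fun g => ?_
    refine ((hcomp g hff').trans ((heigG g).trans ?_))
    filter_upwards [hff'] with x hx
    rw [hx]
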